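/- Suppose V is not constant. Define j_lower := inf { j > 0 : α⁺(j) > 1 } and j_upper := inf { j > 0 : α⁻(j) > 1 }. Then 0 ≤ j_lower < j_upper < ∞. -/

import Mathlib

open MeasureTheory Set

lemma cube_s {j : ℝ} (hj : 0 < j) : (j ^ ((2:ℝ)/3)) ^ (3:ℕ) = j ^ (2:ℕ) := by
  rw [← Real.rpow_natCast (j ^ ((2:ℝ)/3)) 3, ← Real.rpow_mul hj.le]
  norm_num

lemma rpow_subadd (a b : ℝ) (ha : 0 ≤ a) (hb : 0 ≤ b) :
    (a + b) ^ ((2:ℝ)/3) ≤ a ^ ((2:ℝ)/3) + b ^ ((2:ℝ)/3) := by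
  have h := NNReal.rpow_add_le_add_rpow a.toNNReal b.toNNReal (by norm_num : (0:ℝ) ≤ 2/3) (by norm_num)
  have h2 := NNReal.coe_le_coe.mpr h
  push_cast at h2
  rwa [Real.coe_toNNReal _ ha, Real.coe_toNNReal _ hb] at h2

lemma minus_cmp {s a b : ℝ} (ha1 : 0 < a) (ha2 : a ≤ s) (hb1 : 0 < b) (hb2 : b ≤ s)
    (h : s^3/(2*a^2) + a ≤ s^3/(2*b^2) + b) : b ≤ a := by
  by_contra hab
  push_neg at hab  -- a < b
  have key : (s^3/(2*a^2) + a) - (s^3/(2*b^2) + b)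
      = (b - a) * (s^3*(a+b) - 2*a^2*b^2) / (2*a^2*b^2) := by
    field_simp
    ring
  have has : a < s := lt_of_lt_of_le hab hb2
  have hb2' : b^2 ≤ s^2 := by nlinarith
  have h1 : a*b^2 < s^3 := by
    nlinarith [mul_lt_mul_of_pos_right has (show (0:ℝ) < b^2 by positivity),
      mul_le_mul_of_nonneg_left hb2' (le_of_lt (lt_trans ha1 has))]
  have h2 : 2*a^2*b^2 < s^3*(a+b) := by
    nlinarith [mul_lt_mul_of_pos_left h1 (show (0:ℝ) < 2*a by linarith),
      mul_le_mul_of_nonneg_right (show 2*a ≤ a + b by linarith)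
        (pow_pos (ha1.trans has) 3).le]
  have hpos : 0 < (b - a) * (s^3*(a+b) - 2*a^2*b^2) / (2*a^2*b^2) := by
    apply div_pos (mul_pos (by linarith) (by linarith)) (by positivity)
  linarith [key ▸ hpos]

lemma plus_cmp {s a b : ℝ} (hs : 0 < s) (ha : s ≤ a) (hb : s ≤ b)
    (h : s^3/(2*a^2) + a ≤ s^3/(2*b^2) + b) : a ≤ b := by
  by_contra hab
  push_neg at hab  -- b < a
  have ha1 : 0 < a := lt_of_lt_of_le hs ha
  have hb1 : 0 < b := lt_of_lt_of_le hs hb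
  have key : (s^3/(2*b^2) + b) - (s^3/(2*a^2) + a)
      = (a - b) * (s^3*(a+b) - 2*a^2*b^2) / (2*a^2*b^2) := by
    field_simp
    ring
  have hs3 : s^3 ≤ b^3 := pow_le_pow_left₀ hs.le hb 3
  have h1 : a*b^3 < a^2*b^2 := by
    nlinarith [mul_lt_mul_of_pos_left hab (show (0:ℝ) < a*b^2 by positivity)]
  have h2 : b^4 ≤ a^2*b^2 := by
    nlinarith [mul_le_mul_of_nonneg_right (show b^2 ≤ a^2 by nlinarith) (show (0:ℝ) ≤ b^2 by positivity)]
  have h3 : s^3*(a+b) < 2*a^2*b^2 := by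
    nlinarith [mul_le_mul_of_nonneg_right hs3 (show (0:ℝ) ≤ a + b by linarith)]
  have hneg : (a - b) * (s^3*(a+b) - 2*a^2*b^2) / (2*a^2*b^2) < 0 := by
    apply div_neg_of_neg_of_pos (mul_neg_of_pos_of_neg (by linarith) (by linarith)) (by positivity)
  linarith [key ▸ hneg]

lemma mm_ball_bound {s η δ c m : ℝ} (hs : 1/2 ≤ s) (hδ0 : 0 < δ) (hδ14 : δ ≤ 1/4)
    (hδsq : δ^2 ≤ η/12) (hη : 0 < η) (hm0 : 0 < m) (hms : m ≤ s)
    (heq : s^3/(2*m^2) + m = c) (hc : 3/2*s + η ≤ c) : m ≤ s - δ := by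
  have hδs : δ ≤ s/2 := by linarith
  have hsd0 : 0 < s - δ := by linarith
  apply minus_cmp (s := s) hsd0 (by linarith) hm0 hms
  rw [heq]
  have key : s^3/(2*(s-δ)^2) + (s-δ) - (3/2*s + η)
      = (δ^2*(3*s-2*δ) - 2*η*(s-δ)^2)/(2*(s-δ)^2) := by
    field_simp
    ring
  have hnum : δ^2*(3*s-2*δ) - 2*η*(s-δ)^2 ≤ 0 := by
    have h1 : δ^2*(3*s) ≤ (η/12)*(3*s) :=
      mul_le_mul_of_nonneg_right hδsq (by linarith)
    have h2 : (s/2)^2 ≤ (s-δ)^2 := pow_le_pow_left₀ (by linarith) (by linarith) 2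
    have h3 : s/2 ≤ s^2 := by nlinarith
    have h4 : 2*η*((s/2)^2) ≤ 2*η*(s-δ)^2 :=
      mul_le_mul_of_nonneg_left h2 (by linarith)
    have h5 : η*(s/2) ≤ η*s^2 := mul_le_mul_of_nonneg_left h3 hη.le
    nlinarith [mul_pos (mul_pos hδ0 hδ0) hδ0]
  have : (δ^2*(3*s-2*δ) - 2*η*(s-δ)^2)/(2*(s-δ)^2) ≤ 0 :=
    div_nonpos_of_nonpos_of_nonneg hnum (by positivity)
  linarith [key ▸ this]

lemma mp_ball_bound {s η δ c m : ℝ} (hs : 1/2 ≤ s) (hδ0 : 0 < δ) (hδ14 : δ ≤ 1/4)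
    (hδsq : δ^2 ≤ η/12) (hη : 0 < η) (hsm : s ≤ m)
    (heq : s^3/(2*m^2) + m = c) (hc : 3/2*s + η ≤ c) : s + δ ≤ m := by
  have hs0 : 0 < s := by linarith
  apply plus_cmp (s := s) hs0 (by linarith) hsm
  rw [heq]
  have key : s^3/(2*(s+δ)^2) + (s+δ) - (3/2*s + η)
      = (δ^2*(3*s+2*δ) - 2*η*(s+δ)^2)/(2*(s+δ)^2) := by
    field_simp
    ring
  have hnum : δ^2*(3*s+2*δ) - 2*η*(s+δ)^2 ≤ 0 := by
    have h1 : δ^2*(5*s) ≤ (η/12)*(5*s) :=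
      mul_le_mul_of_nonneg_right hδsq (by linarith)
    have h2 : s^2 ≤ (s+δ)^2 := pow_le_pow_left₀ (by linarith) (by linarith) 2
    have h4 : 2*η*(s^2) ≤ 2*η*(s+δ)^2 := mul_le_mul_of_nonneg_left h2 (by linarith)
    have h3 : s/2 ≤ s^2 := by nlinarith
    have h5 : η*(s/2) ≤ η*s^2 := mul_le_mul_of_nonneg_left h3 hη.le
    nlinarith [mul_le_mul_of_nonneg_right (show 2*δ ≤ 2*s by linarith)
      (show (0:ℝ) ≤ δ^2 by positivity)]
  have : (δ^2*(3*s+2*δ) - 2*η*(s+δ)^2)/(2*(s+δ)^2) ≤ 0 :=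
    div_nonpos_of_nonpos_of_nonneg hnum (by positivity)
  linarith [key ▸ this]

lemma lip_ineq {s Δ m : ℝ} (hm : 0 < m) (hms : m ≤ s) (hΔ : 0 ≤ Δ) :
    (s+Δ)^3/(2*(m+Δ)^2) + (m+Δ) ≤ s^3/(2*m^2) + m + (3/2)*Δ := by
  have hmΔ : 0 < m + Δ := by linarith
  have hid : s^3*(m+Δ)^2 + Δ*m^2*(m+Δ)^2 - (s+Δ)^3*m^2
      = Δ*(m*((s-m)^2*(2*s+m))) + Δ*(Δ*((s-m)^2*(s+2*m))) := by ring
  have hpoly : 0 ≤ s^3*(m+Δ)^2 + Δ*m^2*(m+Δ)^2 - (s+Δ)^3*m^2 := by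
    rw [hid]
    have t1 : 0 ≤ Δ*(m*((s-m)^2*(2*s+m))) := mul_nonneg hΔ (mul_nonneg hm.le (mul_nonneg (sq_nonneg _) (by linarith)))
    have t2 : 0 ≤ Δ*(Δ*((s-m)^2*(s+2*m))) := mul_nonneg hΔ (mul_nonneg hΔ (mul_nonneg (sq_nonneg _) (by linarith)))
    linarith
  have key : (s^3/(2*m^2) + m + (3/2)*Δ) - ((s+Δ)^3/(2*(m+Δ)^2) + (m+Δ))
      = (s^3*(m+Δ)^2 + Δ*m^2*(m+Δ)^2 - (s+Δ)^3*m^2)/(2*m^2*(m+Δ)^2) := by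
    field_simp
    ring
  have : 0 ≤ (s^3*(m+Δ)^2 + Δ*m^2*(m+Δ)^2 - (s+Δ)^3*m^2)/(2*m^2*(m+Δ)^2) :=
    div_nonneg hpoly (by positivity)
  linarith [key ▸ this]

lemma mm_lip {s s₁ m m₁ c : ℝ} (hm0 : 0 < m) (hms : m ≤ s) (hss₁ : s ≤ s₁)
    (hm₁0 : 0 < m₁) (hm₁s : m₁ ≤ s₁)
    (heq : s^3/(2*m^2) + m = c)
    (heq₁ : s₁^3/(2*m₁^2) + m₁ = c + 3/2*(s₁ - s)) : m₁ ≤ m + (s₁ - s) := by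
  have hΔ : 0 ≤ s₁ - s := by linarith
  apply minus_cmp (s := s₁) (by linarith) (by linarith) hm₁0 hm₁s
  rw [heq₁]
  have h := lip_ineq hm0 hms hΔ
  have hs1 : s + (s₁ - s) = s₁ := by ring
  rw [hs1] at h
  rw [← heq] at *
  linarith

lemma meas_of_monoV (V : ℝ → ℝ) (hVc : Continuous V) (f : ℝ → ℝ) (L U : ℝ)
    (hL : ∀ x, L ≤ f x) (hU : ∀ x, f x ≤ U)
    (hmono : ∀ x y, V x ≤ V y → f x ≤ f y) : Measurable f := by
  set g : ℝ → ℝ := fun v => sSup (insert L (f '' {x | V x ≤ v})) with hg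
  have hb : ∀ v, BddAbove (insert L (f '' {x | V x ≤ v})) := by
    intro v
    refine ⟨max L U, ?_⟩
    rintro t (rfl | ⟨x, -, rfl⟩)
    · exact le_max_left _ _
    · exact le_trans (hU x) (le_max_right _ _)
  have hgmono : Monotone g := by
    intro v w hvw
    apply csSup_le_csSup (hb w) (insert_nonempty _ _)
    apply insert_subset_insert
    exact image_mono (fun x hx => le_trans hx hvw)
  have hfg : ∀ x, f x = g (V x) := by
    intro x
    apply le_antisymm
    · exact le_csSup (hb _) (mem_insert_of_mem _ ⟨x, by simp, rfl⟩)
    · apply csSup_le (insert_nonempty _ _)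
      rintro t (rfl | ⟨y, hy, rfl⟩)
      · exact hL x
      · exact hmono y x hy
  have : f = g ∘ V := funext hfg
  rw [this]
  exact hgmono.measurable.comp hVc.measurable

lemma intInt_of_bdd (f : ℝ → ℝ) (hf : Measurable f) (C : ℝ) (hC : ∀ x, |f x| ≤ C)
    (a b : ℝ) : IntervalIntegrable f volume a b := by
  rw [intervalIntegrable_iff]
  apply MeasureTheory.Integrable.mono' (g := fun _ => C)
  · exact integrableOn_const measure_Ioc_lt_top.ne
  · exact hf.aestronglyMeasurable.restrict
  · exact ae_of_all _ fun x => by simpa using hC x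


set_option maxHeartbeats 1000000 in
noncomputable def sfn (j : ℝ) : ℝ := j ^ ((2:ℝ)/3)
lemma sfn_def (j : ℝ) : sfn j = j ^ ((2:ℝ)/3) := rfl

set_option maxHeartbeats 2000000 in
theorem stmt_13
    (V : ℝ → ℝ) (hVc : Continuous V) (hVp : Function.Periodic V 1)
    (hVnc : ∃ x y, V x ≠ V y)
    (M : ℝ) (hM : IsGreatest (Set.range V) M)
    (mm mp : ℝ → ℝ → ℝ)
    (hmm : ∀ j x, 0 < j →
      0 < mm j x ∧ mm j x ≤ j ^ ((2:ℝ)/3) ∧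
      j ^ 2 / (2 * (mm j x) ^ 2) + mm j x = (M + 3 / 2 * j ^ ((2:ℝ)/3)) - V x)
    (hmp : ∀ j x, 0 < j →
      j ^ ((2:ℝ)/3) ≤ mp j x ∧
      j ^ 2 / (2 * (mp j x) ^ 2) + mp j x = (M + 3 / 2 * j ^ ((2:ℝ)/3)) - V x) :
    {j : ℝ | 0 < j ∧ 1 < ∫ x in (0:ℝ)..1, mp j x}.Nonempty ∧
    {j : ℝ | 0 < j ∧ 1 < ∫ x in (0:ℝ)..1, mm j x}.Nonempty ∧
    0 ≤ sInf {j : ℝ | 0 < j ∧ 1 < ∫ x in (0:ℝ)..1, mp j x} ∧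
    sInf {j : ℝ | 0 < j ∧ 1 < ∫ x in (0:ℝ)..1, mp j x} <
      sInf {j : ℝ | 0 < j ∧ 1 < ∫ x in (0:ℝ)..1, mm j x} := by
  -- notation
  have hsf_pos : ∀ j : ℝ, 0 < j → 0 < sfn j := fun j hj => Real.rpow_pos_of_pos hj _
  -- max bound
  have hMx : ∀ x, V x ≤ M := fun x => hM.2 ⟨x, rfl⟩
  -- periodic reduction
  have hfract : ∀ x : ℝ, V (Int.fract x) = V x := by
    intro x
    have h := hVp.sub_int_mul_eq (x := x) (n := ⌊x⌋)
    rw [mul_one, Int.self_sub_floor] at h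
    exact h
  -- min of V
  obtain ⟨x0, hx0mem, hx0min⟩ :=
    isCompact_Icc.exists_isMinOn (Set.nonempty_Icc.mpr zero_le_one) hVc.continuousOn
  have hv0 : ∀ x, V x0 ≤ V x := by
    intro x
    rw [← hfract x]
    exact hx0min ⟨Int.fract_nonneg x, (Int.fract_lt_one x).le⟩
  set v0 := V x0 with hv0def
  clear_value v0
  -- equations in s-form
  have heqm : ∀ j x, 0 < j →
      (sfn j)^3/(2*(mm j x)^2) + mm j x = M + 3/2 * sfn j - V x := by
    intro j x hj
    have h := (hmm j x hj).2.2
    rw [sfn_def, cube_s hj]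
    linarith [h]
  have heqp : ∀ j x, 0 < j →
      (sfn j)^3/(2*(mp j x)^2) + mp j x = M + 3/2 * sfn j - V x := by
    intro j x hj
    have h := (hmp j x hj).2
    rw [sfn_def, cube_s hj]
    linarith [h]
  have hmm_le : ∀ j x, 0 < j → mm j x ≤ sfn j := fun j x hj => (hmm j x hj).2.1
  have hmp_ge : ∀ j x, 0 < j → sfn j ≤ mp j x := fun j x hj => (hmp j x hj).1
  have hmp_pos : ∀ j x, 0 < j → 0 < mp j x :=
    fun j x hj => lt_of_lt_of_le (hsf_pos j hj) (hmp_ge j x hj)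
  have hmp_ub : ∀ j x, 0 < j → mp j x ≤ M + 3/2 * sfn j - v0 := by
    intro j x hj
    have h := heqp j x hj
    have h1 : 0 < (sfn j)^3/(2*(mp j x)^2) := by
      apply div_pos (pow_pos (hsf_pos j hj) 3)
      have := hmp_pos j x hj
      positivity
    have h2 := hv0 x
    linarith
  -- monotone dependence on V
  have hmmV : ∀ j, 0 < j → ∀ x y, V x ≤ V y → mm j x ≤ mm j y := by
    intro j hj x y hxy
    have h1 := heqm j x hj
    have h2 := heqm j y hj
    exact minus_cmp (hmm j y hj).1 (hmm_le j y hj) (hmm j x hj).1 (hmm_le j x hj)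
      (by rw [h1, h2]; linarith)
  have hmpV' : ∀ j, 0 < j → ∀ x y, V x ≤ V y → mp j y ≤ mp j x := by
    intro j hj x y hxy
    have h1 := heqp j x hj
    have h2 := heqp j y hj
    exact plus_cmp (hsf_pos j hj) (hmp_ge j y hj) (hmp_ge j x hj)
      (by rw [h1, h2]; linarith)
  -- measurability and integrability
  have hmeas_mm : ∀ j, 0 < j → Measurable (mm j) := by
    intro j hj
    exact meas_of_monoV V hVc (mm j) 0 (sfn j)
      (fun x => (hmm j x hj).1.le) (fun x => hmm_le j x hj) (hmmV j hj)
  have hmeas_mp : ∀ j, 0 < j → Measurable (mp j) := by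
    intro j hj
    have h := meas_of_monoV V hVc (fun x => -(mp j x)) (-(M + 3/2 * sfn j - v0)) 0
      (fun x => neg_le_neg (hmp_ub j x hj))
      (fun x => neg_nonpos_of_nonneg (hmp_pos j x hj).le)
      (fun x y hxy => neg_le_neg (hmpV' j hj x y hxy))
    have : Measurable (fun x => -(-(mp j x))) := h.neg
    simpa using this
  have hInt_mm : ∀ j, 0 < j → ∀ a b : ℝ, IntervalIntegrable (mm j) volume a b := by
    intro j hj a b
    apply intInt_of_bdd (mm j) (hmeas_mm j hj) (sfn j)
    intro x
    rw [abs_le]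
    constructor
    · linarith [(hmm j x hj).1, hsf_pos j hj]
    · exact hmm_le j x hj
  have hInt_mp : ∀ j, 0 < j → ∀ a b : ℝ, IntervalIntegrable (mp j) volume a b := by
    intro j hj a b
    apply intInt_of_bdd (mp j) (hmeas_mp j hj) (M + 3/2 * sfn j - v0)
    intro x
    rw [abs_le]
    constructor
    · linarith [hmp_pos j x hj, hmp_ub j x hj]
    · exact hmp_ub j x hj
  -- point with V p < M
  obtain ⟨p, hp0, hp1, hpM⟩ : ∃ p : ℝ, 0 < p ∧ p ≤ 1 ∧ V p < M := by
    obtain ⟨x, y, hxy⟩ := hVnc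
    have hz : ∃ z, V z < M := by
      rcases lt_or_eq_of_le (hMx x) with h | h
      · exact ⟨x, h⟩
      · rcases lt_or_eq_of_le (hMx y) with h' | h'
        · exact ⟨y, h'⟩
        · exact absurd (h.trans h'.symm) hxy
    obtain ⟨z, hz⟩ := hz
    by_cases hq : Int.fract z = 0
    · refine ⟨1, one_pos, le_refl 1, ?_⟩
      have h1 : V 1 = V 0 := by simpa using hVp 0
      have h0 : V 0 = V z := by rw [← hfract z, hq]
      rw [h1, h0]; exact hz
    · exact ⟨Int.fract z, lt_of_le_of_ne (Int.fract_nonneg z) (Ne.symm hq),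
        (Int.fract_lt_one z).le, by rw [hfract z]; exact hz⟩
  set η := (M - V p)/2 with hηdef
  have hη : 0 < η := by rw [hηdef]; linarith
  obtain ⟨d, hd0, hdV⟩ := Metric.continuous_iff.mp hVc p η hη
  set r := min (d/2) (p/2) with hrdef
  have hr0 : 0 < r := lt_min (by linarith) (by linarith)
  have hrp : r ≤ p/2 := min_le_right _ _
  have hVball' : True := trivial
  have hVball : ∀ x ∈ Icc (p - r) p, V x ≤ M - η := by
    intro x hx
    have habs : |x - p| ≤ r := abs_le.mpr ⟨by linarith [hx.1], by linarith [hx.2]⟩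
    have hdist : dist x p < d := by
      calc dist x p = |x - p| := Real.dist_eq x p
        _ ≤ r := habs
        _ < d := by linarith [min_le_left (d/2) (p/2)]
    have h2 := (abs_lt.mp (by rw [← Real.dist_eq]; exact hdV x hdist)).2
    have hVp2 : V p = M - 2*η := by rw [hηdef]; ring
    linarith
  clear_value η
  clear_value r
  set δ := min (1/4 : ℝ) (Real.sqrt (η/12)) with hδdef
  have hδ0 : 0 < δ := lt_min (by norm_num) (Real.sqrt_pos.mpr (by linarith))
  have hδ14 : δ ≤ 1/4 := min_le_left _ _
  have hδsq : δ^2 ≤ η/12 := by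
    calc δ^2 ≤ (Real.sqrt (η/12))^2 := pow_le_pow_left₀ hδ0.le (min_le_right _ _) 2
      _ = η/12 := Real.sq_sqrt (by linarith)
  clear_value δ
  set g0 := 2*δ*r with hg0def
  have hg0 : 0 < g0 := by rw [hg0def]; positivity
  clear_value g0
  -- s lower bound for j ≥ 1/2
  have hs_half : ∀ j : ℝ, 1/2 ≤ j → 1/2 ≤ sfn j := by
    intro j hj
    have h1 : ((1:ℝ)/2) ^ ((2:ℝ)/3) ≤ j ^ ((2:ℝ)/3) :=
      Real.rpow_le_rpow (by norm_num) hj (by norm_num)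
    have h2 : ((1:ℝ)/2) ^ (1:ℝ) ≤ ((1:ℝ)/2) ^ ((2:ℝ)/3) :=
      Real.rpow_le_rpow_of_exponent_ge (by norm_num) (by norm_num) (by norm_num)
    rw [Real.rpow_one] at h2
    rw [sfn_def]
    linarith
  -- the gap estimate
  have hgap : ∀ j : ℝ, 1/2 ≤ j →
      (∫ x in (0:ℝ)..1, mm j x) + g0 ≤ ∫ x in (0:ℝ)..1, mp j x := by
    intro j hj2
    have hj : 0 < j := by linarith
    have hs : 1/2 ≤ sfn j := hs_half j hj2
    have ha0 : 0 ≤ p - r := by linarith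
    have hap : p - r ≤ p := by linarith
    have hId : ∀ u v : ℝ, IntervalIntegrable (fun x => mp j x - mm j x) volume u v :=
      fun u v => (hInt_mp j hj u v).sub (hInt_mm j hj u v)
    have hnonneg : ∀ x : ℝ, 0 ≤ mp j x - mm j x := fun x => by
      linarith [hmm_le j x hj, hmp_ge j x hj]
    have h1 : 0 ≤ ∫ x in (0:ℝ)..(p - r), (mp j x - mm j x) :=
      intervalIntegral.integral_nonneg ha0 (fun u _ => hnonneg u)
    have h3 : 0 ≤ ∫ x in p..1, (mp j x - mm j x) :=
      intervalIntegral.integral_nonneg hp1 (fun u _ => hnonneg u)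
    have h2 : 2*δ*r ≤ ∫ x in (p - r)..p, (mp j x - mm j x) := by
      have hpt : ∀ x ∈ Icc (p - r) p, 2*δ ≤ mp j x - mm j x := by
        intro x hx
        have hVx := hVball x hx
        have hcge : 3/2 * sfn j + η ≤ M + 3/2 * sfn j - V x := by linarith
        have hmmb := mm_ball_bound hs hδ0 hδ14 hδsq hη (hmm j x hj).1
          (hmm_le j x hj) (heqm j x hj) hcge
        have hmpb := mp_ball_bound hs hδ0 hδ14 hδsq hη (hmp_ge j x hj)
          (heqp j x hj) hcge
        linarith
      calc 2*δ*r = ∫ _x in (p - r)..p, (2*δ) := by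
            rw [intervalIntegral.integral_const]
            simp
            ring
        _ ≤ ∫ x in (p - r)..p, (mp j x - mm j x) :=
            intervalIntegral.integral_mono_on hap intervalIntegrable_const (hId _ _) hpt
    have hsplit1 := intervalIntegral.integral_add_adjacent_intervals (hId 0 (p - r)) (hId (p - r) p)
    have hsplit2 := intervalIntegral.integral_add_adjacent_intervals (hId 0 p) (hId p 1)
    have hsub := intervalIntegral.integral_sub (hInt_mp j hj 0 1) (hInt_mm j hj 0 1)
    rw [hg0def]
    linarith [hsub, hsplit1, hsplit2, h1, h2, h3]
  -- Lipschitz-type estimate in j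
  have hsmono : ∀ u v : ℝ, 0 ≤ u → u ≤ v → sfn u ≤ sfn v := by
    intro u v hu huv
    rw [sfn_def, sfn_def]
    exact Real.rpow_le_rpow hu huv (by norm_num)
  have hlip : ∀ j j₁ : ℝ, 0 < j → j ≤ j₁ →
      (∫ x in (0:ℝ)..1, mm j₁ x) ≤ (∫ x in (0:ℝ)..1, mm j x) + (sfn j₁ - sfn j) := by
    intro j j₁ hj hjj
    have hj₁ : 0 < j₁ := lt_of_lt_of_le hj hjj
    have hss : sfn j ≤ sfn j₁ := hsmono j j₁ hj.le hjj
    have hpt : ∀ x ∈ Icc (0:ℝ) 1, mm j₁ x ≤ mm j x + (sfn j₁ - sfn j) := by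
      intro x _
      apply mm_lip (hmm j x hj).1 (hmm_le j x hj) hss (hmm j₁ x hj₁).1
        (hmm_le j₁ x hj₁) (heqm j x hj)
      rw [heqm j₁ x hj₁]
      ring
    calc (∫ x in (0:ℝ)..1, mm j₁ x)
        ≤ ∫ x in (0:ℝ)..1, (mm j x + (sfn j₁ - sfn j)) :=
          intervalIntegral.integral_mono_on (by norm_num) (hInt_mm j₁ hj₁ 0 1)
            ((hInt_mm j hj 0 1).add intervalIntegrable_const) hpt
      _ = (∫ x in (0:ℝ)..1, mm j x) + (sfn j₁ - sfn j) := by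
          rw [intervalIntegral.integral_add (hInt_mm j hj 0 1) intervalIntegrable_const,
            intervalIntegral.integral_const]
          simp
  -- nonemptiness of the plus set
  have hSp_ne : {j : ℝ | 0 < j ∧ 1 < ∫ x in (0:ℝ)..1, mp j x}.Nonempty := by
    have h8 : (0:ℝ) < 8 := by norm_num
    refine ⟨8, h8, ?_⟩
    have hcube : (sfn 8)^(3:ℕ) = (8:ℝ)^(2:ℕ) := by rw [sfn_def]; exact cube_s h8
    have hpos := hsf_pos 8 h8
    have hcube' : (sfn 8)^(3:ℕ) = 64 := by rw [hcube]; norm_num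
    have hfac : (sfn 8 - 4)*((sfn 8)^2 + 4*sfn 8 + 16) = 0 := by linear_combination hcube'
    have hq : 0 < (sfn 8)^2 + 4*sfn 8 + 16 := by positivity
    have hs8 : 2 ≤ sfn 8 := by
      rcases mul_eq_zero.mp hfac with h | h
      · linarith
      · linarith
    have hpt : ∀ x ∈ Icc (0:ℝ) 1, (2:ℝ) ≤ mp 8 x := fun x _ => le_trans hs8 (hmp_ge 8 x h8)
    have : (2:ℝ) = ∫ _x in (0:ℝ)..1, (2:ℝ) := by simp
    calc (1:ℝ) < 2 := by norm_num
      _ = ∫ _x in (0:ℝ)..1, (2:ℝ) := this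
      _ ≤ ∫ x in (0:ℝ)..1, mp 8 x :=
          intervalIntegral.integral_mono_on (by norm_num) intervalIntegrable_const
            (hInt_mp 8 h8 0 1) hpt
  -- nonemptiness of the minus set
  have hSm_ne : {j : ℝ | 0 < j ∧ 1 < ∫ x in (0:ℝ)..1, mm j x}.Nonempty := by
    set C := M - v0 with hCdef
    have hC0 : 0 ≤ C := by rw [hCdef]; linarith [hv0 x0, hMx x0]
    set J := max 1 (12 + 8*C) with hJdef
    have hJ1 : (1:ℝ) ≤ J := le_max_left _ _
    have hJge : 12 + 8*C ≤ J := le_max_right _ _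
    have hJ0 : 0 < J := by linarith
    clear_value J
    clear_value C
    have hsJle : sfn J ≤ J := by
      have h := Real.rpow_le_rpow_of_exponent_le hJ1 (by norm_num : (2:ℝ)/3 ≤ 1)
      rw [Real.rpow_one] at h
      simpa [sfn_def] using h
    have hsJpos := hsf_pos J hJ0
    have hJsq : 8*C + 12*sfn J ≤ J^2 := by nlinarith
    have hcube : (sfn J)^(3:ℕ) = J^(2:ℕ) := by rw [sfn_def]; exact cube_s hJ0
    have hpt : ∀ x : ℝ, 2 ≤ mm J x := by
      intro x
      have heq := heqm J x hJ0
      have hm0 := (hmm J x hJ0).1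
      have hub : (sfn J)^3/(2*(mm J x)^2) ≤ C + 3/2*sfn J := by
        have hvx := hv0 x
        rw [hCdef]
        linarith
      have hd2 : 0 < 2*(mm J x)^2 := by positivity
      rw [div_le_iff₀ hd2] at hub
      have h2 : J^2 ≤ (mm J x)^2*(2*C + 3*sfn J) := by
        rw [← hcube]
        nlinarith [hub]
      have hposC : 0 < 2*C + 3*sfn J := by linarith
      have h4 : 4 ≤ (mm J x)^2 := by nlinarith [h2, hJsq, hposC]
      nlinarith [hm0, h4]
    refine ⟨J, hJ0, ?_⟩
    calc (1:ℝ) < 2 := by norm_num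
      _ = ∫ _x in (0:ℝ)..1, (2:ℝ) := by simp
      _ ≤ ∫ x in (0:ℝ)..1, mm J x :=
          intervalIntegral.integral_mono_on (by norm_num) intervalIntegrable_const
            (hInt_mm J hJ0 0 1) (fun x _ => hpt x)
  -- final assembly
  have hbddm : BddBelow {j : ℝ | 0 < j ∧ 1 < ∫ x in (0:ℝ)..1, mm j x} :=
    ⟨0, fun j hj => hj.1.le⟩
  have hbddp : BddBelow {j : ℝ | 0 < j ∧ 1 < ∫ x in (0:ℝ)..1, mp j x} :=
    ⟨0, fun j hj => hj.1.le⟩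
  refine ⟨hSp_ne, hSm_ne, Real.sInf_nonneg (fun j hj => hj.1.le), ?_⟩
  have hone : ∀ j ∈ {j : ℝ | 0 < j ∧ 1 < ∫ x in (0:ℝ)..1, mm j x}, (1:ℝ) ≤ j := by
    intro j hj
    obtain ⟨hj0, hint⟩ := hj
    by_contra hcon
    push_neg at hcon
    have hs1 : sfn j ≤ 1 := by
      rw [sfn_def]
      exact Real.rpow_le_one hj0.le hcon.le (by norm_num)
    have hle : (∫ x in (0:ℝ)..1, mm j x) ≤ ∫ _x in (0:ℝ)..1, sfn j :=
      intervalIntegral.integral_mono_on (by norm_num) (hInt_mm j hj0 0 1)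
        intervalIntegrable_const (fun x _ => hmm_le j x hj0)
    rw [intervalIntegral.integral_const] at hle
    simp at hle
    linarith
  set j₀ := sInf {j : ℝ | 0 < j ∧ 1 < ∫ x in (0:ℝ)..1, mm j x} with hj₀def
  have hj₀1 : 1 ≤ j₀ := le_csInf hSm_ne hone
  clear_value j₀
  set β := min (1/4 : ℝ) (g0 ^ ((3:ℝ)/2) / 2) with hβdef
  have hβ0 : 0 < β :=
    lt_min (by norm_num) (div_pos (Real.rpow_pos_of_pos hg0 _) two_pos)
  have hβ14 : β ≤ 1/4 := min_le_left _ _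
  have hβr : 2*β ≤ g0 ^ ((3:ℝ)/2) := by
    have := min_le_right (1/4 : ℝ) (g0 ^ ((3:ℝ)/2) / 2)
    rw [hβdef]
    linarith
  clear_value β
  have h2β : (2*β) ^ ((2:ℝ)/3) ≤ g0 := by
    have h1 : 2*β ≤ g0 ^ ((3:ℝ)/2) := hβr
    calc (2*β) ^ ((2:ℝ)/3) ≤ (g0 ^ ((3:ℝ)/2)) ^ ((2:ℝ)/3) :=
          Real.rpow_le_rpow (by linarith) h1 (by norm_num)
      _ = g0 := by
          rw [← Real.rpow_mul hg0.le]
          norm_num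
  obtain ⟨j₁, hj₁mem, hj₁lt⟩ := (csInf_lt_iff hbddm hSm_ne).mp
    (show sInf {j : ℝ | 0 < j ∧ 1 < ∫ x in (0:ℝ)..1, mm j x} < j₀ + β by
      rw [← hj₀def]; linarith)
  have hj₀j₁ : j₀ ≤ j₁ := by rw [hj₀def]; exact csInf_le hbddm hj₁mem
  have hjhalf : 1/2 ≤ j₀ - β := by linarith
  have hjpos : 0 < j₀ - β := by linarith
  have hjj₁ : j₀ - β ≤ j₁ := by linarith
  have hA := hgap (j₀ - β) hjhalf
  have hL := hlip (j₀ - β) j₁ hjpos hjj₁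
  have hd : sfn j₁ - sfn (j₀ - β) ≤ g0 := by
    have hsub : sfn j₁ ≤ sfn (j₀ - β) + (j₁ - (j₀ - β)) ^ ((2:ℝ)/3) := by
      have h := rpow_subadd (j₀ - β) (j₁ - (j₀ - β)) hjpos.le (by linarith)
      have he : (j₀ - β) + (j₁ - (j₀ - β)) = j₁ := by ring
      rw [he] at h
      simpa [sfn_def] using h
    have h2 : (j₁ - (j₀ - β)) ^ ((2:ℝ)/3) ≤ (2*β) ^ ((2:ℝ)/3) :=
      Real.rpow_le_rpow (by linarith) (by linarith) (by norm_num)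
    linarith
  have hj₁int : 1 < ∫ x in (0:ℝ)..1, mm j₁ x := hj₁mem.2
  have hjSp : (j₀ - β) ∈ {j : ℝ | 0 < j ∧ 1 < ∫ x in (0:ℝ)..1, mp j x} :=
    ⟨hjpos, by linarith⟩
  have hfin := csInf_le hbddp hjSp
  linarith
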